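/- Let S be a V-martingale (increments of absolute value at least 1, or 0) and x a binary sequence on which S does not go bankrupt. If for every natural number k the sequence min(k, ⌊S(x↾n)⌋) is eventually constant in n, then S does not oscillate on x: liminf_n S(x↾n) = limsup_n S(x↾n) or both are infinite in the same way; in particular S does not achieve oscillation on x. -/

import Mathlib

open Filter

noncomputable section

/-- The length-`n` prefix of an infinite binary sequence (`true` = +1, `false` = -1). -/
def pre (x : ℕ → Bool) (n : ℕ) : List Bool := (List.range n).map x

/-- The increment (wager) of `M` at `σ`: `M'(σ) = (M(σ,+1) - M(σ,-1))/2`. -/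
def inc (M : List Bool → ℝ) (σ : List Bool) : ℝ :=
  (M (σ ++ [true]) - M (σ ++ [false])) / 2

/-- The marginal consumption of `M` at `σ`. -/
def marginal (M : List Bool → ℝ) (σ : List Bool) : ℝ :=
  M σ - (M (σ ++ [false]) + M (σ ++ [true])) / 2

def IsSupermartingale (M : List Bool → ℝ) : Prop :=
  ∀ σ, (M (σ ++ [false]) + M (σ ++ [true])) / 2 ≤ M σ

def IsMartingale (M : List Bool → ℝ) : Prop :=
  ∀ σ, M σ = (M (σ ++ [false]) + M (σ ++ [true])) / 2

/-- The proper cover of `M`: the martingale with the same initial capital and increments. -/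
def cover (M : List Bool → ℝ) (σ : List Bool) : ℝ :=
  M [] + ∑ k ∈ Finset.range σ.length,
    (if σ.getD k false then inc M (σ.take k) else - inc M (σ.take k))

/-- `M` goes bankrupt at `σ`. -/
def Bankrupts (M : List Bool → ℝ) (σ : List Bool) : Prop :=
  M σ - |inc M σ| < marginal M σ

/-- `M` goes bankrupt on `x`. -/
def BankruptOn (M : List Bool → ℝ) (x : ℕ → Bool) : Prop :=
  ∃ n, Bankrupts M (pre x n)

/-- `M` achieves ∞-gains on `x`. -/
def AchievesGains (M : List Bool → ℝ) (x : ℕ → Bool) : Prop :=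
  ¬ BankruptOn M x ∧ Tendsto (fun n => M (pre x n)) atTop atTop

/-- `M` achieves ∞-consumption on `x`. -/
def AchievesConsumption (M : List Bool → ℝ) (x : ℕ → Bool) : Prop :=
  ¬ BankruptOn M x ∧ Tendsto (fun n => cover M (pre x n) - M (pre x n)) atTop atTop

/-- `M` achieves oscillation on `x`. -/
def AchievesOscillation (M : List Bool → ℝ) (x : ℕ → Bool) : Prop :=
  ¬ BankruptOn M x ∧
    liminf (fun n => ((cover M (pre x n) : ℝ) : EReal)) atTop ≠
      limsup (fun n => ((cover M (pre x n) : ℝ) : EReal)) atTop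

/-- An `A`-(super)martingale: all wagers lie in `A`. -/
def WagersIn (M : List Bool → ℝ) (A : Set ℝ) : Prop := ∀ σ, inc M σ ∈ A

/-- History independence: the wager depends only on the length of the history. -/
def HistoryIndependent (M : List Bool → ℝ) : Prop :=
  ∀ σ τ : List Bool, σ.length = τ.length → inc M σ = inc M τ

/-- The wager set `V = {a : |a| ≥ 1} ∪ {0}`. -/
def Vset : Set ℝ := {a : ℝ | 1 ≤ |a|} ∪ {0}


lemma pre_succ (x : ℕ → Bool) (n : ℕ) : pre x (n+1) = pre x n ++ [x n] := by
  simp [pre, List.range_succ]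

lemma step_eq (S : List Bool → ℝ) (hS : IsMartingale S) (σ : List Bool) (b : Bool) :
    S (σ ++ [b]) = S σ + (if b then inc S σ else - inc S σ) := by
  have h := hS σ
  cases b <;> simp [inc] <;> linarith

lemma cover_eq_self (S : List Bool → ℝ) (hS : IsMartingale S) (σ : List Bool) :
    cover S σ = S σ := by
  induction σ using List.reverseRecOn with
  | nil => simp [cover]
  | append_singleton σ b ih =>
    have hsum : cover S (σ ++ [b]) = cover S σ + (if b then inc S σ else - inc S σ) := by
      simp only [cover, List.length_append, List.length_singleton, Finset.sum_range_succ]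
      have h1 : ∀ k ∈ Finset.range σ.length,
          (if (σ ++ [b]).getD k false then inc S ((σ ++ [b]).take k)
            else - inc S ((σ ++ [b]).take k))
          = (if σ.getD k false then inc S (σ.take k) else - inc S (σ.take k)) := by
        intro k hk
        rw [Finset.mem_range] at hk
        rw [List.getD_append _ _ _ _ hk, List.take_append_of_le_length hk.le]
      rw [Finset.sum_congr rfl h1]
      have h2 : (σ ++ [b]).getD σ.length false = b := by
        simp [List.getD_append_right, List.getD]
      have h3 : (σ ++ [b]).take σ.length = σ := List.take_left
      rw [h2, h3]
      ring
    rw [hsum, ih, ← step_eq S hS]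

lemma stmt16_aux (S : List Bool → ℝ) (x : ℕ → Bool)
    (hS : IsMartingale S) (hV : WagersIn S Vset)
    (hstab : ∀ k : ℤ, ∃ N, ∀ n ≥ N, min k ⌊S (pre x n)⌋ = min k ⌊S (pre x N)⌋) :

    (liminf (fun n => ((S (pre x n) : ℝ) : EReal)) atTop
      = limsup (fun n => ((S (pre x n) : ℝ) : EReal)) atTop) := by
  set f : ℕ → ℝ := fun n => S (pre x n) with hf
  by_cases hdiv : ∀ k : ℤ, ∀ᶠ n in atTop, (k : ℝ) ≤ f n
  · have h : Tendsto (fun n => ((f n : ℝ) : EReal)) atTop (nhds ⊤) := by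
      rw [EReal.tendsto_nhds_top_iff_real]
      intro r
      filter_upwards [hdiv (⌈r⌉ + 1)] with n hn
      have : r < (⌈r⌉ + 1 : ℤ) := by
        push_cast
        exact lt_of_le_of_lt (Int.le_ceil r) (by linarith)
      exact_mod_cast lt_of_lt_of_le this hn
    rw [h.liminf_eq, h.limsup_eq]
  · push_neg at hdiv
    obtain ⟨k, hk⟩ := hdiv
    replace hk : ∃ᶠ n in atTop, ¬ (k : ℝ) ≤ f n := hk.mono fun n h => not_le.mpr h
    obtain ⟨N, hN⟩ := hstab k
    obtain ⟨n0, hn0, hfn0⟩ := (frequently_atTop.mp hk) N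
    rw [not_le] at hfn0
    have hfloor0 : ⌊f n0⌋ < k := Int.floor_lt.mpr (by exact_mod_cast hfn0)
    set m : ℤ := min k ⌊f N⌋ with hm
    have hmk : m < k := by
      have h0 := hN n0 hn0
      rw [min_eq_right hfloor0.le] at h0
      omega
    have hconst : ∀ n ≥ N, ⌊f n⌋ = m := by
      intro n hn
      have h0 := hN n hn
      rcases le_total k ⌊f n⌋ with h | h
      · rw [min_eq_left h] at h0; omega
      · rwa [min_eq_right h] at h0
    have hstep : ∀ n ≥ N, f (n + 1) = f n := by
      intro n hn
      have h1 : f (n + 1) = f n + (if x n then inc S (pre x n) else - inc S (pre x n)) := by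
        rw [hf]; simp only [pre_succ]; exact step_eq S hS _ _
      rcases hV (pre x n) with hge | h0
      · exfalso
        have hd : (1 : ℝ) ≤ |f (n + 1) - f n| := by
          rw [h1]
          rcases Bool.eq_false_or_eq_true (x n) with hb | hb <;>
            simp [hb, abs_neg] <;> simpa using hge
        have hn1 : ⌊f n⌋ = m := hconst n hn
        have hn2 : ⌊f (n + 1)⌋ = m := hconst (n + 1) (by omega)
        have e1 : (m : ℝ) ≤ f n := hn1 ▸ Int.floor_le (f n)
        have e2 : f n < m + 1 := by
          have := Int.lt_floor_add_one (f n); rw [hn1] at this; exact_mod_cast this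
        have e3 : (m : ℝ) ≤ f (n + 1) := hn2 ▸ Int.floor_le (f (n + 1))
        have e4 : f (n + 1) < m + 1 := by
          have := Int.lt_floor_add_one (f (n + 1)); rw [hn2] at this; exact_mod_cast this
        have hlt : |f (n + 1) - f n| < 1 :=
          abs_sub_lt_iff.mpr ⟨by linarith, by linarith⟩
        linarith
      · rw [h1, h0]; simp
    have hflat : ∀ n ≥ N, f n = f N := by
      intro n hn
      induction n with
      | zero =>
        have hz : N = 0 := by omega
        rw [hz]
      | succ p ih =>
        rcases Nat.lt_or_ge p N with h | h
        · have : p + 1 = N := by omega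
          rw [this]
        · rw [hstep p h, ih h]
    have h : Tendsto (fun n => ((f n : ℝ) : EReal)) atTop (nhds ((f N : ℝ) : EReal)) := by
      apply Tendsto.congr' _ tendsto_const_nhds
      filter_upwards [eventually_ge_atTop N] with n hn
      rw [hflat n hn]
    exact h.liminf_eq.trans h.limsup_eq.symm

/-- If S is a V-martingale not going bankrupt on x, and for every k the sequence
min(k, ⌊S(x↾n)⌋) is eventually constant in n, then S does not oscillate on x. -/
theorem stmt16 (S : List Bool → ℝ) (x : ℕ → Bool)
    (hS : IsMartingale S) (hV : WagersIn S Vset)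
    (hnb : ¬ BankruptOn S x)
    (hstab : ∀ k : ℤ, ∃ N, ∀ n ≥ N, min k ⌊S (pre x n)⌋ = min k ⌊S (pre x N)⌋) :
    (liminf (fun n => ((S (pre x n) : ℝ) : EReal)) atTop
      = limsup (fun n => ((S (pre x n) : ℝ) : EReal)) atTop) ∧
    ¬ AchievesOscillation S x := by
  
  have heq := stmt16_aux S x hS hV hstab
  refine ⟨heq, ?_⟩
  rintro ⟨-, hne⟩
  apply hne
  simp only [cover_eq_self S hS]
  exact heq
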